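/- Serial rule: let Γ = Γ(A₁,A₂;H) be the family of all walks in a finite graph H from A₁ to A₂, let C ⊆ V(H) be a cut for Γ (every walk in Γ visits C), and let Γⱼ = Γ(Aⱼ,C;H) for j=1,2. Then 1/Mod(Γ) ≥ 1/Mod(Γ₁) + 1/Mod(Γ₂). -/

import Mathlib

open scoped ENNReal

variable {V : Type*} [DecidableEq V] {G : SimpleGraph V} [Fintype G.edgeSet]

/-- A walk in `G` with arbitrary endpoints. -/
abbrev GWalk (G : SimpleGraph V) : Type _ := Σ u : V, Σ v : V, G.Walk u v

/-- The `ρ`-length of a walk: sum of `ρ` over traversed edges with multiplicity. -/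
def wlen (ρ : G.edgeSet → ℝ) (γ : GWalk G) : ℝ :=
  ∑ e : G.edgeSet, (γ.2.2.edges.count (e : Sym2 V) : ℝ) * ρ e

/-- Admissible densities for a family of walks. -/
def Adm (Γ : Set (GWalk G)) : Set (G.edgeSet → ℝ) :=
  {ρ | (∀ e, 0 ≤ ρ e) ∧ ∀ γ ∈ Γ, 1 ≤ wlen ρ γ}

/-- The energy of a density. -/
def energy (G : SimpleGraph V) [Fintype G.edgeSet] (ρ : G.edgeSet → ℝ) : ℝ :=
  ∑ e, ρ e ^ 2

/-- The modulus of a family of walks. -/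
noncomputable def GMod (Γ : Set (GWalk G)) : ℝ≥0∞ :=
  sInf ((fun ρ => ENNReal.ofReal (energy G ρ)) '' Adm Γ)

/-- The family of all walks starting in `A` and ending in `B`. -/
def conn (G : SimpleGraph V) (A B : Set V) : Set (GWalk G) :=
  {γ : GWalk G | γ.1 ∈ A ∧ γ.2.1 ∈ B}


lemma energy_nonneg (ρ : G.edgeSet → ℝ) : 0 ≤ energy G ρ :=
  Finset.sum_nonneg fun e _ => sq_nonneg _

lemma wlen_nonneg {ρ : G.edgeSet → ℝ} (hρ : ∀ e, 0 ≤ ρ e) (γ : GWalk G) : 0 ≤ wlen ρ γ :=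
  Finset.sum_nonneg fun e _ => mul_nonneg (Nat.cast_nonneg _) (hρ e)

lemma wlen_mono {ρ σ : G.edgeSet → ℝ} (h : ∀ e, ρ e ≤ σ e) (γ : GWalk G) :
    wlen ρ γ ≤ wlen σ γ :=
  Finset.sum_le_sum fun e _ => mul_le_mul_of_nonneg_left (h e) (Nat.cast_nonneg _)

lemma wlen_const_mul (a : ℝ) (ρ : G.edgeSet → ℝ) (γ : GWalk G) :
    wlen (fun e => a * ρ e) γ = a * wlen ρ γ := by
  simp only [wlen, Finset.mul_sum]
  exact Finset.sum_congr rfl fun e _ => by ring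

lemma GMod_le_of_adm {Γ : Set (GWalk G)} {ρ : G.edgeSet → ℝ} (h : ρ ∈ Adm Γ) :
    GMod Γ ≤ ENNReal.ofReal (energy G ρ) :=
  sInf_le ⟨ρ, h, rfl⟩

lemma split_walk {A₁ A₂ C : Set V}
    (hcut : ∀ γ ∈ conn G A₁ A₂, ∃ c ∈ C, c ∈ γ.2.2.support)
    {γ : GWalk G} (hγ : γ ∈ conn G A₁ A₂) :
    ∃ γ₁ ∈ conn G A₁ C, ∃ γ₂ ∈ conn G A₂ C,
      ∀ ρ : G.edgeSet → ℝ, wlen ρ γ = wlen ρ γ₁ + wlen ρ γ₂ := by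
  obtain ⟨hu, hv⟩ := hγ
  obtain ⟨c, hcC, hcs⟩ := hcut γ ⟨hu, hv⟩
  obtain ⟨u, v, w⟩ := γ
  refine ⟨⟨u, c, w.takeUntil c hcs⟩, ⟨hu, hcC⟩,
    ⟨v, c, (w.dropUntil c hcs).reverse⟩, ⟨hv, hcC⟩, fun ρ => ?_⟩
  unfold wlen
  rw [← Finset.sum_add_distrib]
  refine Finset.sum_congr rfl fun e _ => ?_
  rw [← add_mul]
  congr 1
  conv_lhs => rw [← w.take_spec hcs]
  rw [SimpleGraph.Walk.edges_append, List.count_append,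
    SimpleGraph.Walk.edges_reverse, List.count_reverse]
  push_cast
  ring

/-- Any density admissible for a sub-family `conn G A C` obtained from a cut is
admissible for the whole family. -/
lemma adm_sub₁ {A₁ A₂ C : Set V}
    (hcut : ∀ γ ∈ conn G A₁ A₂, ∃ c ∈ C, c ∈ γ.2.2.support)
    {ρ : G.edgeSet → ℝ} (h : ρ ∈ Adm (conn G A₁ C)) : ρ ∈ Adm (conn G A₁ A₂) := by
  refine ⟨h.1, fun γ hγ => ?_⟩
  obtain ⟨γ₁, h₁, γ₂, h₂, hsum⟩ := split_walk hcut hγ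
  rw [hsum ρ]
  have := h.2 γ₁ h₁
  have := wlen_nonneg h.1 γ₂
  linarith

lemma adm_sub₂ {A₁ A₂ C : Set V}
    (hcut : ∀ γ ∈ conn G A₁ A₂, ∃ c ∈ C, c ∈ γ.2.2.support)
    {ρ : G.edgeSet → ℝ} (h : ρ ∈ Adm (conn G A₂ C)) : ρ ∈ Adm (conn G A₁ A₂) := by
  refine ⟨h.1, fun γ hγ => ?_⟩
  obtain ⟨γ₁, h₁, γ₂, h₂, hsum⟩ := split_walk hcut hγ
  rw [hsum ρ]
  have := h.2 γ₂ h₂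
  have := wlen_nonneg h.1 γ₁
  linarith

theorem serial_rule (A₁ A₂ C : Set V)
    (hcut : ∀ γ ∈ conn G A₁ A₂, ∃ c ∈ C, c ∈ γ.2.2.support) :
    (GMod (conn G A₁ A₂))⁻¹ ≥ (GMod (conn G A₁ C))⁻¹ + (GMod (conn G A₂ C))⁻¹ := by
  by_cases hM0 : GMod (conn G A₁ A₂) = 0
  · rw [hM0]; simp
  have hMle₁ : GMod (conn G A₁ A₂) ≤ GMod (conn G A₁ C) :=
    sInf_le_sInf (Set.image_mono fun ρ h => adm_sub₁ hcut h)
  have hMle₂ : GMod (conn G A₁ A₂) ≤ GMod (conn G A₂ C) :=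
    sInf_le_sInf (Set.image_mono fun ρ h => adm_sub₂ hcut h)
  by_cases h₁top : GMod (conn G A₁ C) = ⊤
  · rw [h₁top]
    simpa using ENNReal.inv_le_inv' hMle₂
  by_cases h₂top : GMod (conn G A₂ C) = ⊤
  · rw [h₂top]
    simpa using ENNReal.inv_le_inv' hMle₁
  -- the family is nonempty
  have hne : (conn G A₁ A₂).Nonempty := by
    rw [Set.nonempty_iff_ne_empty]
    intro h
    apply hM0
    refine le_antisymm ?_ zero_le
    have h0 : (fun _ => (0:ℝ)) ∈ Adm (conn G A₁ A₂) :=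
      ⟨fun e => le_refl 0, fun γ hγ => by rw [h] at hγ; exact absurd hγ (Set.notMem_empty γ)⟩
    have := GMod_le_of_adm h0
    simpa [energy] using this
  obtain ⟨γ₀, hγ₀⟩ := hne
  obtain ⟨γ₁, hγ₁, γ₂, hγ₂, -⟩ := split_walk hcut hγ₀
  -- key estimate for every ε > 0
  have key : ∀ ε : ℝ≥0∞, 0 < ε →
      (GMod (conn G A₁ C) + ε)⁻¹ + (GMod (conn G A₂ C) + ε)⁻¹
        ≤ (GMod (conn G A₁ A₂))⁻¹ := by
    intro ε hε
    have hlt₁ : GMod (conn G A₁ C) < GMod (conn G A₁ C) + ε :=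
      ENNReal.lt_add_right h₁top hε.ne'
    have hlt₂ : GMod (conn G A₂ C) < GMod (conn G A₂ C) + ε :=
      ENNReal.lt_add_right h₂top hε.ne'
    rw [GMod, sInf_lt_iff] at hlt₁ hlt₂
    obtain ⟨-, ⟨ρ₁, hρ₁, rfl⟩, hE₁⟩ := hlt₁
    obtain ⟨-, ⟨ρ₂, hρ₂, rfl⟩, hE₂⟩ := hlt₂
    set E₁ := energy G ρ₁ with hE₁def
    set E₂ := energy G ρ₂ with hE₂def
    -- energies are positive
    have hpos : ∀ (ρ : G.edgeSet → ℝ), (∀ e, 0 ≤ ρ e) → ∀ γ : GWalk G,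
        1 ≤ wlen ρ γ → 0 < energy G ρ := by
      intro ρ hρ γ hw
      rcases lt_or_eq_of_le (energy_nonneg ρ) with h | h
      · exact h
      · exfalso
        have hz : ∀ e ∈ (Finset.univ : Finset G.edgeSet), ρ e ^ 2 = 0 := by
          intro e _
          have := (Finset.sum_eq_zero_iff_of_nonneg
            (fun e _ => sq_nonneg (ρ e))).mp h.symm
          exact this e (Finset.mem_univ e)
        have hz' : ∀ e, ρ e = 0 := fun e => by
          have := hz e (Finset.mem_univ e); exact (pow_eq_zero_iff two_ne_zero).mp this
        have : wlen ρ γ = 0 := by simp [wlen, hz']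
        linarith
    have hE₁pos : 0 < E₁ := hpos ρ₁ hρ₁.1 γ₁ (hρ₁.2 γ₁ hγ₁)
    have hE₂pos : 0 < E₂ := hpos ρ₂ hρ₂.1 γ₂ (hρ₂.2 γ₂ hγ₂)
    have hsumpos : 0 < E₁ + E₂ := by linarith
    set a : ℝ := E₂ / (E₁ + E₂) with hadef
    set b : ℝ := E₁ / (E₁ + E₂) with hbdef
    have ha : 0 ≤ a := div_nonneg hE₂pos.le hsumpos.le
    have hb : 0 ≤ b := div_nonneg hE₁pos.le hsumpos.le
    have hab : a + b = 1 := by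
      rw [hadef, hbdef]; field_simp; ring
    set ρ : G.edgeSet → ℝ := fun e => max (a * ρ₁ e) (b * ρ₂ e) with hρdef
    have hρ0 : ∀ e, 0 ≤ ρ e := fun e =>
      le_trans (mul_nonneg ha (hρ₁.1 e)) (le_max_left _ _)
    have hadm : ρ ∈ Adm (conn G A₁ A₂) := by
      refine ⟨hρ0, fun γ hγ => ?_⟩
      obtain ⟨δ₁, hδ₁, δ₂, hδ₂, hsum⟩ := split_walk hcut hγ
      rw [hsum ρ]
      have l₁ : a ≤ wlen ρ δ₁ := by
        have h1 : wlen (fun e => a * ρ₁ e) δ₁ ≤ wlen ρ δ₁ :=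
          wlen_mono (fun e => le_max_left _ _) δ₁
        rw [wlen_const_mul] at h1
        have h2 : 1 ≤ wlen ρ₁ δ₁ := hρ₁.2 δ₁ hδ₁
        nlinarith
      have l₂ : b ≤ wlen ρ δ₂ := by
        have h1 : wlen (fun e => b * ρ₂ e) δ₂ ≤ wlen ρ δ₂ :=
          wlen_mono (fun e => le_max_right _ _) δ₂
        rw [wlen_const_mul] at h1
        have h2 : 1 ≤ wlen ρ₂ δ₂ := hρ₂.2 δ₂ hδ₂
        nlinarith
      linarith
    have hen : energy G ρ ≤ E₁ * E₂ / (E₁ + E₂) := by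
      have step : energy G ρ ≤ a ^ 2 * E₁ + b ^ 2 * E₂ := by
        rw [hE₁def, hE₂def, energy, energy, energy, Finset.mul_sum, Finset.mul_sum,
          ← Finset.sum_add_distrib]
        have hsq : ∀ x y : ℝ, (max x y) ^ 2 ≤ x ^ 2 + y ^ 2 := by
          intro x y
          rcases max_cases x y with ⟨h1, h2⟩ | ⟨h1, h2⟩ <;> rw [h1] <;> nlinarith
        refine Finset.sum_le_sum fun e _ => ?_
        show max (a * ρ₁ e) (b * ρ₂ e) ^ 2 ≤ a ^ 2 * ρ₁ e ^ 2 + b ^ 2 * ρ₂ e ^ 2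
        refine le_trans (hsq _ _) (le_of_eq (by ring))
      have : a ^ 2 * E₁ + b ^ 2 * E₂ = E₁ * E₂ / (E₁ + E₂) := by
        rw [hadef, hbdef]; field_simp; ring
      linarith
    have hMle : GMod (conn G A₁ A₂) ≤ ENNReal.ofReal (E₁ * E₂ / (E₁ + E₂)) :=
      le_trans (GMod_le_of_adm hadm) (ENNReal.ofReal_le_ofReal hen)
    have hfrac : (ENNReal.ofReal (E₁ * E₂ / (E₁ + E₂)))⁻¹
        = (ENNReal.ofReal E₁)⁻¹ + (ENNReal.ofReal E₂)⁻¹ := by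
      rw [← ENNReal.ofReal_inv_of_pos (by positivity),
        ← ENNReal.ofReal_inv_of_pos hE₁pos, ← ENNReal.ofReal_inv_of_pos hE₂pos,
        ← ENNReal.ofReal_add (by positivity) (by positivity)]
      congr 1
      field_simp
      ring
    calc (GMod (conn G A₁ C) + ε)⁻¹ + (GMod (conn G A₂ C) + ε)⁻¹
        ≤ (ENNReal.ofReal E₁)⁻¹ + (ENNReal.ofReal E₂)⁻¹ := by
          gcongr
          · exact hE₁.le
          · exact hE₂.le
      _ = (ENNReal.ofReal (E₁ * E₂ / (E₁ + E₂)))⁻¹ := hfrac.symm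
      _ ≤ (GMod (conn G A₁ A₂))⁻¹ := ENNReal.inv_le_inv' hMle
  -- pass to the limit ε → 0⁺
  have cont : Continuous fun ε : ℝ≥0∞ =>
      (GMod (conn G A₁ C) + ε)⁻¹ + (GMod (conn G A₂ C) + ε)⁻¹ := by
    fun_prop
  have tend : Filter.Tendsto
      (fun ε : ℝ≥0∞ => (GMod (conn G A₁ C) + ε)⁻¹ + (GMod (conn G A₂ C) + ε)⁻¹)
      (nhdsWithin 0 (Set.Ioi 0))
      (nhds ((GMod (conn G A₁ C))⁻¹ + (GMod (conn G A₂ C))⁻¹)) := by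
    have h0 := cont.tendsto 0
    simp only [add_zero] at h0
    exact h0.mono_left nhdsWithin_le_nhds
  refine le_of_tendsto tend ?_
  filter_upwards [self_mem_nhdsWithin] with ε hε using key ε hε
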